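/- For any N ≥ 2, in gl(N) the element r_j = H_{1N} ∧ E_{1N} + 2 Σ_{k=2}^{N-1} E_{1k} ∧ E_{kN}, where H_{1N} = E_{11} - E_{NN}, satisfies the classical Yang–Baxter equation [r_{12}, r_{13}] + [r_{12}, r_{23}] + [r_{13}, r_{23}] = 0. -/

import Mathlib

/- STATEMENT 4: For any N ≥ 2, in gl(N) the jordanian element
r_j = H_{1N} ∧ E_{1N} + 2 Σ_{k=2}^{N-1} E_{1k} ∧ E_{kN},  H_{1N} = E_{11} - E_{NN},
satisfies the classical Yang–Baxter equation
[r₁₂,r₁₃] + [r₁₂,r₂₃] + [r₁₃,r₂₃] = 0 in U(gl(N))^{⊗3}. -/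

open scoped TensorProduct

attribute [local instance 100] LieRing.ofAssociativeRing
set_option synthInstance.maxHeartbeats 1000000
set_option maxHeartbeats 2000000

noncomputable section

variable (N : ℕ)

abbrev glN (N : ℕ) := Matrix (Fin N) (Fin N) ℚ
abbrev UN (N : ℕ) := UniversalEnvelopingAlgebra ℚ (glN N)

noncomputable def ιN : glN N → UN N := fun a => UniversalEnvelopingAlgebra.ι ℚ a

noncomputable def p12 : UN N ⊗[ℚ] UN N →ₐ[ℚ] (UN N ⊗[ℚ] UN N) ⊗[ℚ] UN N :=
  Algebra.TensorProduct.includeLeft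

noncomputable def p13 : UN N ⊗[ℚ] UN N →ₐ[ℚ] (UN N ⊗[ℚ] UN N) ⊗[ℚ] UN N :=
  Algebra.TensorProduct.map Algebra.TensorProduct.includeLeft (AlgHom.id ℚ (UN N))

noncomputable def p23 : UN N ⊗[ℚ] UN N →ₐ[ℚ] (UN N ⊗[ℚ] UN N) ⊗[ℚ] UN N :=
  Algebra.TensorProduct.map Algebra.TensorProduct.includeRight (AlgHom.id ℚ (UN N))

/-- a ∧ b = a ⊗ b - b ⊗ a in U(gl(N)) ⊗ U(gl(N)) -/
noncomputable def wedge (a b : glN N) : UN N ⊗[ℚ] UN N :=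
  ιN N a ⊗ₜ[ℚ] ιN N b - ιN N b ⊗ₜ[ℚ] ιN N a


noncomputable def Cyb (u v : UN N ⊗[ℚ] UN N) : (UN N ⊗[ℚ] UN N) ⊗[ℚ] UN N :=
  ⁅p12 N u, p13 N v⁆ + ⁅p12 N u, p23 N v⁆ + ⁅p13 N u, p23 N v⁆

lemma Cyb_add_left (u u' v : UN N ⊗[ℚ] UN N) :
    Cyb N (u + u') v = Cyb N u v + Cyb N u' v := by
  simp only [Cyb, map_add, Ring.lie_def, add_mul, mul_add]; abel

lemma Cyb_add_right (u v v' : UN N ⊗[ℚ] UN N) :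
    Cyb N u (v + v') = Cyb N u v + Cyb N u v' := by
  simp only [Cyb, map_add, Ring.lie_def, add_mul, mul_add]; abel

lemma Cyb_smul_left (c : ℚ) (u v : UN N ⊗[ℚ] UN N) :
    Cyb N (c • u) v = c • Cyb N u v := by
  simp only [Cyb, map_smul, Ring.lie_def, smul_mul_assoc, mul_smul_comm, smul_sub, smul_add]

lemma Cyb_smul_right (c : ℚ) (u v : UN N ⊗[ℚ] UN N) :
    Cyb N u (c • v) = c • Cyb N u v := by
  simp only [Cyb, map_smul, Ring.lie_def, smul_mul_assoc, mul_smul_comm, smul_sub, smul_add]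

lemma Cyb_sub_left (u u' v : UN N ⊗[ℚ] UN N) :
    Cyb N (u - u') v = Cyb N u v - Cyb N u' v := by
  simp only [Cyb, map_sub, Ring.lie_def, sub_mul, mul_sub]; abel

lemma Cyb_sub_right (u v v' : UN N ⊗[ℚ] UN N) :
    Cyb N u (v - v') = Cyb N u v - Cyb N u v' := by
  simp only [Cyb, map_sub, Ring.lie_def, sub_mul, mul_sub]; abel

lemma Cyb_sum_left {α : Type*} (s : Finset α) (f : α → UN N ⊗[ℚ] UN N) (v : UN N ⊗[ℚ] UN N) :
    Cyb N (∑ a ∈ s, f a) v = ∑ a ∈ s, Cyb N (f a) v := by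
  classical
  induction s using Finset.induction with
  | empty => simp [Cyb, Ring.lie_def]
  | insert _ _ h ih => simp [Finset.sum_insert h, Cyb_add_left, ih]

lemma Cyb_sum_right {α : Type*} (s : Finset α) (u : UN N ⊗[ℚ] UN N) (f : α → UN N ⊗[ℚ] UN N) :
    Cyb N u (∑ a ∈ s, f a) = ∑ a ∈ s, Cyb N u (f a) := by
  classical
  induction s using Finset.induction with
  | empty => simp [Cyb, Ring.lie_def]
  | insert _ _ h ih => simp [Finset.sum_insert h, Cyb_add_right, ih]

lemma iota_lie (a b : glN N) :
    ιN N ⁅a, b⁆ = ιN N a * ιN N b - ιN N b * ιN N a := by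
  show UniversalEnvelopingAlgebra.ι ℚ ⁅a, b⁆ = _
  rw [LieHom.map_lie, Ring.lie_def]; rfl

lemma Cyb_tmul (a b a' b' : glN N) :
    Cyb N (ιN N a ⊗ₜ[ℚ] ιN N b) (ιN N a' ⊗ₜ[ℚ] ιN N b') =
      ((ιN N a * ιN N a' - ιN N a' * ιN N a) ⊗ₜ[ℚ] ιN N b) ⊗ₜ[ℚ] ιN N b'
      + (ιN N a ⊗ₜ[ℚ] (ιN N b * ιN N a' - ιN N a' * ιN N b)) ⊗ₜ[ℚ] ιN N b'
      + (ιN N a ⊗ₜ[ℚ] ιN N a') ⊗ₜ[ℚ] (ιN N b * ιN N b' - ιN N b' * ιN N b) := by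
  simp only [Cyb, p12, p13, p23, Algebra.TensorProduct.includeLeft_apply,
    Algebra.TensorProduct.map_tmul, AlgHom.coe_id, id_eq,
    Algebra.TensorProduct.includeRight_apply, Ring.lie_def,
    Algebra.TensorProduct.tmul_mul_tmul, one_mul, mul_one,
    TensorProduct.sub_tmul, TensorProduct.tmul_sub]

lemma iota_sub (a b : glN N) : ιN N (a - b) = ιN N a - ιN N b := by
  show (UniversalEnvelopingAlgebra.ι ℚ (L := glN N)).toLinearMap (a - b) = _
  exact LinearMap.map_sub _ a b

lemma wedge_sub_left (a b c : glN N) :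
    wedge N (a - b) c = wedge N a c - wedge N b c := by
  simp only [wedge, iota_sub, TensorProduct.sub_tmul, TensorProduct.tmul_sub]
  abel

lemma Cyb_tmul' (a b a' b' : glN N) :
    Cyb N (ιN N a ⊗ₜ[ℚ] ιN N b) (ιN N a' ⊗ₜ[ℚ] ιN N b') =
      (ιN N ⁅a, a'⁆ ⊗ₜ[ℚ] ιN N b) ⊗ₜ[ℚ] ιN N b'
      + (ιN N a ⊗ₜ[ℚ] ιN N ⁅b, a'⁆) ⊗ₜ[ℚ] ιN N b'
      + (ιN N a ⊗ₜ[ℚ] ιN N a') ⊗ₜ[ℚ] ιN N ⁅b, b'⁆ := by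
  rw [Cyb_tmul, iota_lie, iota_lie, iota_lie]


lemma iota_zero : ιN N 0 = 0 := by
  show (UniversalEnvelopingAlgebra.ι ℚ (L := glN N)).toLinearMap 0 = 0
  exact LinearMap.map_zero _

lemma iota_neg (a : glN N) : ιN N (-a) = -ιN N a := by
  show (UniversalEnvelopingAlgebra.ι ℚ (L := glN N)).toLinearMap (-a) = _
  exact LinearMap.map_neg _ a


theorem glN_jordanian_r_matrix_CYBE (hN : 2 ≤ N) :
    let E : Fin N → Fin N → glN N := fun i j => Matrix.single i j 1
    let one : Fin N := ⟨0, by omega⟩          -- the index "1" (0-based: 0)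
    let last : Fin N := ⟨N - 1, by omega⟩     -- the index "N" (0-based: N-1)
    let H1N : glN N := E one one - E last last
    let r : UN N ⊗[ℚ] UN N :=
      wedge N H1N (E one last) +
      (2 : ℚ) • ∑ k ∈ Finset.univ.filter (fun k : Fin N => 0 < (k : ℕ) ∧ (k : ℕ) < N - 1),
        wedge N (E one k) (E k last)
    ⁅p12 N r, p13 N r⁆ + ⁅p12 N r, p23 N r⁆ + ⁅p13 N r, p23 N r⁆ = 0 := by
  intro E one last H1N r
  classical
  show Cyb N r r = 0
  set S : Finset (Fin N) :=
    Finset.univ.filter (fun k : Fin N => 0 < (k : ℕ) ∧ (k : ℕ) < N - 1) with hS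
  have honl : one ≠ last := by
    intro h; simp only [one, last, Fin.ext_iff] at h; omega
  have hlno : last ≠ one := honl.symm
  have hmem : ∀ k ∈ S, k ≠ one ∧ k ≠ last ∧ one ≠ k ∧ last ≠ k := by
    intro k hk
    simp only [hS, Finset.mem_filter, Finset.mem_univ, true_and] at hk
    refine ⟨?_, ?_, ?_, ?_⟩ <;> intro h <;>
      simp only [one, last, Fin.ext_iff] at h <;> omega
  have hmul : ∀ i j p q : Fin N, E i j * E p q = if j = p then E i q else 0 := by
    intro i j p q
    by_cases h : j = p
    · subst h; simp only [E, Matrix.single_mul_single_same, mul_one, if_true]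
    · simp only [h, if_false, E]
      exact Matrix.single_mul_single_of_ne (h := h) ..
  have hlie : ∀ i j p q : Fin N,
      ⁅E i j, E p q⁆ = (if j = p then E i q else 0) - (if q = i then E p j else 0) := by
    intro i j p q
    rw [Ring.lie_def, hmul, hmul]
  have hH : H1N = E one one - E last last := rfl
  -- the diagonal pieces
  have key : ∀ k ∈ S,
      (2:ℚ) • Cyb N (wedge N H1N (E one last)) (wedge N (E one k) (E k last))
      + (2:ℚ) • Cyb N (wedge N (E one k) (E k last)) (wedge N H1N (E one last))
      + (2:ℚ) • ((2:ℚ) • Cyb N (wedge N (E one k) (E k last)) (wedge N (E one k) (E k last))) = 0 := by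
    intro k hk
    obtain ⟨hk1, hk2, hk3, hk4⟩ := hmem k hk
    rw [hH, wedge_sub_left]
    simp only [wedge, Cyb_sub_left, Cyb_sub_right, Cyb_tmul', hlie,
      honl, hlno, hk1, hk2, hk3, hk4, if_true, if_false,
      sub_self, sub_zero, zero_sub, iota_zero, iota_neg,
      TensorProduct.zero_tmul, TensorProduct.tmul_zero,
      TensorProduct.neg_tmul, TensorProduct.tmul_neg,
      smul_add, smul_sub, smul_neg, two_smul]
    abel
  have hww : Cyb N (wedge N H1N (E one last)) (wedge N H1N (E one last)) = 0 := by
    rw [hH, wedge_sub_left]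
    simp only [wedge, Cyb_sub_left, Cyb_sub_right, Cyb_tmul', hlie,
      honl, hlno, if_true, if_false,
      sub_self, sub_zero, zero_sub, iota_zero, iota_neg,
      TensorProduct.zero_tmul, TensorProduct.tmul_zero,
      TensorProduct.neg_tmul, TensorProduct.tmul_neg]
    try abel
  have hoff : ∀ k ∈ S, ∀ l ∈ S, l ≠ k →
      Cyb N (wedge N (E one k) (E k last)) (wedge N (E one l) (E l last)) = 0 := by
    intro k hk l hl hlk
    obtain ⟨hk1, hk2, hk3, hk4⟩ := hmem k hk
    obtain ⟨hl1, hl2, hl3, hl4⟩ := hmem l hl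
    have hkl : k ≠ l := hlk.symm
    simp only [wedge, Cyb_sub_left, Cyb_sub_right, Cyb_tmul', hlie,
      honl, hlno, hk1, hk2, hk3, hk4, hl1, hl2, hl3, hl4, hkl, hlk, if_false,
      sub_self, sub_zero, zero_sub, iota_zero, iota_neg,
      TensorProduct.zero_tmul, TensorProduct.tmul_zero,
      TensorProduct.neg_tmul, TensorProduct.tmul_neg]
    try abel
  have hr : r = wedge N H1N (E one last)
      + (2:ℚ) • ∑ k ∈ S, wedge N (E one k) (E k last) := rfl
  rw [hr]
  simp only [Cyb_add_left, Cyb_add_right, Cyb_smul_left, Cyb_smul_right,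
    Cyb_sum_left, Cyb_sum_right]
  have hdiag : ∀ x ∈ S,
      Cyb N (wedge N H1N (E one last)) (wedge N (E one x) (E x last)) +
        (2:ℚ) • ∑ a ∈ S, Cyb N (wedge N (E one a) (E a last)) (wedge N (E one x) (E x last))
      = Cyb N (wedge N H1N (E one last)) (wedge N (E one x) (E x last)) +
        (2:ℚ) • Cyb N (wedge N (E one x) (E x last)) (wedge N (E one x) (E x last)) := by
    intro x hx
    congr 1
    congr 1
    rw [Finset.sum_eq_single x]
    · intro a ha hax; exact hoff a ha x hx hax.symm
    · intro h; exact absurd hx h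
  rw [Finset.sum_congr rfl hdiag, hww, zero_add]
  rw [Finset.smul_sum, Finset.smul_sum, ← Finset.sum_add_distrib]
  refine Finset.sum_eq_zero fun x hx => ?_
  have h := key x hx
  rw [← h, smul_add]
  abel
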